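/- Let a > 0 and M > 0. For x ∈ (aℤ)², define g(x) = (2π)^{−2} ∫_{[−π/a,π/a]²} e^{i k·x} / (|σ(k)|² + M²) dk, where |σ(k)|² = ∑_{μ∈{0,1}} 2(1 − cos(a k_μ))/a². Then: (i) g(x) is real and g(x) ≥ 0 for every x ∈ (aℤ)²; (ii) the family (g(x))_{x∈(aℤ)²} is summable and a² ∑_{x∈(aℤ)²} g(x) = 1/M². Consequently the ℓ¹ norm a² ∑_{x∈(aℤ)²} |g(x)| equals M^{−2}. -/

import Mathlib

/-!
Statement 3: the position-space kernel of the massive lattice boson propagator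
(ξ = 0) on the infinite lattice `(aℤ)²`:
`g(x) = (2π)⁻² ∫_{[−π/a,π/a]²} e^{ik·x}/(|σ(k)|² + M²) dk` is real and
nonnegative, the family is summable, and `a² ∑_x g(x) = 1/M²`; consequently its
ℓ¹ norm `a² ∑_x |g(x)|` equals `M⁻²`.
-/

open Real MeasureTheory Complex

noncomputable section

namespace SommerfieldStmt3

/-- The lattice symbol `|σ(k)|² = ∑_{μ∈{0,1}} 2(1 − cos(a k_μ))/a²`. -/
def sigmaSq (a : ℝ) (k : ℝ × ℝ) : ℝ :=
  2 * (1 - Real.cos (a * k.1)) / a ^ 2 + 2 * (1 - Real.cos (a * k.2)) / a ^ 2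

/-- The Brillouin zone `[−π/a, π/a]²`. -/
def BZ (a : ℝ) : Set (ℝ × ℝ) :=
  Set.Icc (-(π / a)) (π / a) ×ˢ Set.Icc (-(π / a)) (π / a)

/-- The position-space boson propagator kernel at the lattice site
`x = (a n₁, a n₂) ∈ (aℤ)²`:
`g(x) = (2π)⁻² ∫_{[−π/a,π/a]²} e^{i k·x} / (|σ(k)|² + M²) dk`. -/
def g (a M : ℝ) (n : ℤ × ℤ) : ℂ :=
  ((2 * π : ℝ) ^ 2 : ℂ)⁻¹ *
    ∫ k in BZ a,
      Complex.exp (Complex.I * (k.1 * (a * (n.1 : ℝ)) + k.2 * (a * (n.2 : ℝ)))) /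
        ((sigmaSq a k + M ^ 2 : ℝ) : ℂ)

def fker (a : ℝ) (k : ℝ × ℝ) : ℝ := 2 * Real.cos (a * k.1) + 2 * Real.cos (a * k.2)

def eker (a : ℝ) (n : ℤ × ℤ) (k : ℝ × ℝ) : ℂ :=
  Complex.exp (Complex.I * (k.1 * (a * (n.1 : ℝ)) + k.2 * (a * (n.2 : ℝ))))

def Fker (a : ℝ) (m : ℕ) (n : ℤ × ℤ) : ℂ := ∫ k in BZ a, eker a n k * (fker a k : ℂ) ^ m

lemma isCompact_BZ (a : ℝ) : IsCompact (BZ a) := isCompact_Icc.prod isCompact_Icc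

lemma cont_ef (a : ℝ) (n : ℤ × ℤ) (m : ℕ) :
    Continuous fun k => eker a n k * (fker a k : ℂ) ^ m := by
  unfold eker fker; fun_prop

lemma integrable_ef (a : ℝ) (n : ℤ × ℤ) (m : ℕ) :
    IntegrableOn (fun k => eker a n k * (fker a k : ℂ) ^ m) (BZ a) :=
  (cont_ef a n m).continuousOn.integrableOn_compact (isCompact_BZ a)

lemma integral_exp_int (ha : 0 < a) (n : ℤ) :
    ∫ u in Set.Icc (-(π / a)) (π / a), Complex.exp (Complex.I * (u * (a * (n : ℝ)))) =
      if n = 0 then ((2 * π / a : ℝ) : ℂ) else 0 := by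
  have hle : -(π / a) ≤ π / a := by
    have : 0 ≤ π / a := by positivity
    linarith
  rw [MeasureTheory.integral_Icc_eq_integral_Ioc, ← intervalIntegral.integral_of_le hle]
  rcases eq_or_ne n 0 with hn | hn
  · subst hn
    push_cast
    simp only [mul_zero, Complex.exp_zero]
    rw [intervalIntegral.integral_const, sub_neg_eq_add, Complex.real_smul]
    push_cast
    ring
  · rw [if_neg hn]
    push_cast
    have han : (a : ℂ) * (n : ℤ) ≠ 0 :=
      mul_ne_zero (by exact_mod_cast ha.ne') (by exact_mod_cast hn)
    have hc : Complex.I * ((a : ℂ) * (n : ℤ)) ≠ 0 := mul_ne_zero Complex.I_ne_zero han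
    simp_rw [show ∀ u : ℝ, Complex.I * ((u : ℂ) * ((a : ℂ) * ((n : ℤ) : ℂ))) =
        (Complex.I * ((a : ℂ) * ((n : ℤ) : ℂ))) * (u : ℂ) from fun u => by ring]
    rw [integral_exp_mul_complex hc]
    have h2 : (Complex.I * ((a : ℂ) * ((n : ℤ) : ℂ))) * ((π / a : ℝ) : ℂ) =
        (Complex.I * ((a : ℂ) * ((n : ℤ) : ℂ))) * ((-(π / a) : ℝ) : ℂ) +
          (n : ℂ) * (2 * π * Complex.I) := by
      push_cast
      field_simp [show (a : ℂ) ≠ 0 from by exact_mod_cast ha.ne']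
      ring
    rw [h2, Complex.exp_add, Complex.exp_int_mul_two_pi_mul_I, mul_one, sub_self, zero_div]

lemma Fker_zero (ha : 0 < a) (n : ℤ × ℤ) :
    Fker a 0 n = if n = 0 then (((2 * π / a) ^ 2 : ℝ) : ℂ) else 0 := by
  have : Fker a 0 n = ∫ k in BZ a,
      (fun u : ℝ => Complex.exp (Complex.I * (u * (a * (n.1 : ℝ))))) k.1 *
      (fun v : ℝ => Complex.exp (Complex.I * (v * (a * (n.2 : ℝ))))) k.2 := by
    unfold Fker eker
    refine setIntegral_congr_fun (isCompact_BZ a).measurableSet fun k _ => ?_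
    simp only [pow_zero, mul_one]
    rw [← Complex.exp_add]
    ring_nf
  have h2 := MeasureTheory.setIntegral_prod_mul (μ := (volume : Measure ℝ))
    (ν := (volume : Measure ℝ))
    (fun u : ℝ => Complex.exp (Complex.I * (u * (a * (n.1 : ℝ)))))
    (fun v : ℝ => Complex.exp (Complex.I * (v * (a * (n.2 : ℝ)))))
    (Set.Icc (-(π / a)) (π / a)) (Set.Icc (-(π / a)) (π / a))
  rw [this, BZ, Measure.volume_eq_prod, h2, integral_exp_int ha n.1, integral_exp_int ha n.2]
  rcases eq_or_ne n 0 with hn | hn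
  · subst hn
    simp [pow_two]
  · rw [if_neg hn]
    have : n.1 ≠ 0 ∨ n.2 ≠ 0 := by
      by_contra h
      push_neg at h
      exact hn (Prod.ext h.1 h.2)
    rcases this with h | h
    · rw [if_neg h, zero_mul]
    · rw [if_neg h, mul_zero]

lemma eker_mul_f (a : ℝ) (n : ℤ × ℤ) (k : ℝ × ℝ) :
    eker a n k * (fker a k : ℂ) =
      eker a (n + (1, 0)) k + eker a (n - (1, 0)) k +
      eker a (n + (0, 1)) k + eker a (n - (0, 1)) k := by
  have h1 : eker a (n + (1, 0)) k = eker a n k * Complex.exp (((a : ℂ) * k.1) * Complex.I) := by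
    unfold eker; rw [← Complex.exp_add]; congr 1
    simp only [Prod.fst_add, Prod.snd_add, Prod.fst_sub, Prod.snd_sub]
    push_cast; ring
  have h2 : eker a (n - (1, 0)) k = eker a n k * Complex.exp (-((a : ℂ) * k.1) * Complex.I) := by
    unfold eker; rw [← Complex.exp_add]; congr 1
    simp only [Prod.fst_add, Prod.snd_add, Prod.fst_sub, Prod.snd_sub]
    push_cast; ring
  have h3 : eker a (n + (0, 1)) k = eker a n k * Complex.exp (((a : ℂ) * k.2) * Complex.I) := by
    unfold eker; rw [← Complex.exp_add]; congr 1
    simp only [Prod.fst_add, Prod.snd_add, Prod.fst_sub, Prod.snd_sub]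
    push_cast; ring
  have h4 : eker a (n - (0, 1)) k = eker a n k * Complex.exp (-((a : ℂ) * k.2) * Complex.I) := by
    unfold eker; rw [← Complex.exp_add]; congr 1
    simp only [Prod.fst_add, Prod.snd_add, Prod.fst_sub, Prod.snd_sub]
    push_cast; ring
  have hf : (fker a k : ℂ) = Complex.exp (((a : ℂ) * k.1) * Complex.I) +
      Complex.exp (-((a : ℂ) * k.1) * Complex.I) +
      Complex.exp (((a : ℂ) * k.2) * Complex.I) +
      Complex.exp (-((a : ℂ) * k.2) * Complex.I) := by
    unfold fker
    push_cast
    rw [Complex.two_cos, Complex.two_cos]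
    ring
  rw [h1, h2, h3, h4, hf]
  ring

lemma Fker_succ (a : ℝ) (m : ℕ) (n : ℤ × ℤ) :
    Fker a (m + 1) n = Fker a m (n + (1, 0)) + Fker a m (n - (1, 0)) +
      Fker a m (n + (0, 1)) + Fker a m (n - (0, 1)) := by
  have h1 : (fun k => eker a n k * (fker a k : ℂ) ^ (m + 1)) = fun k =>
      eker a (n + (1, 0)) k * (fker a k : ℂ) ^ m +
      eker a (n - (1, 0)) k * (fker a k : ℂ) ^ m +
      eker a (n + (0, 1)) k * (fker a k : ℂ) ^ m +
      eker a (n - (0, 1)) k * (fker a k : ℂ) ^ m := by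
    funext k
    calc eker a n k * (fker a k : ℂ) ^ (m + 1)
        = (eker a n k * (fker a k : ℂ)) * (fker a k : ℂ) ^ m := by rw [pow_succ]; ring
      _ = _ := by rw [eker_mul_f]; ring
  have hA := integrable_ef a (n + (1, 0)) m
  have hB := integrable_ef a (n - (1, 0)) m
  have hC := integrable_ef a (n + (0, 1)) m
  have hD := integrable_ef a (n - (0, 1)) m
  unfold Fker
  have hAB : IntegrableOn (fun k => eker a (n + (1, 0)) k * (fker a k : ℂ) ^ m +
      eker a (n - (1, 0)) k * (fker a k : ℂ) ^ m) (BZ a) := hA.add hB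
  have hABC : IntegrableOn (fun k => eker a (n + (1, 0)) k * (fker a k : ℂ) ^ m +
      eker a (n - (1, 0)) k * (fker a k : ℂ) ^ m +
      eker a (n + (0, 1)) k * (fker a k : ℂ) ^ m) (BZ a) := hAB.add hC
  rw [h1, integral_add hABC hD, integral_add hAB hC, integral_add hA hB]

def cker (a : ℝ) (m : ℕ) (n : ℤ × ℤ) : ℝ := (Fker a m n).re

lemma cker_succ (ha : 0 < a) (m : ℕ) (n : ℤ × ℤ) :
    cker a (m + 1) n = cker a m (n + (1, 0)) + cker a m (n - (1, 0)) +
      cker a m (n + (0, 1)) + cker a m (n - (0, 1)) := by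
  simp [cker, Fker_succ a m n, Complex.add_re]

lemma Fker_real (ha : 0 < a) (m : ℕ) :
    ∀ n, Fker a m n = ((cker a m n : ℝ) : ℂ) ∧ 0 ≤ cker a m n := by
  induction m with
  | zero =>
    intro n
    rcases eq_or_ne n 0 with hn | hn
    · subst hn
      have hz := Fker_zero ha (0 : ℤ × ℤ)
      rw [if_pos rfl] at hz
      have hck : cker a 0 0 = (2 * π / a) ^ 2 := by rw [cker, hz, Complex.ofReal_re]
      refine ⟨by rw [hz, hck], by rw [hck]; positivity⟩
    · have hz := Fker_zero ha n
      rw [if_neg hn] at hz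
      have hck : cker a 0 n = 0 := by rw [cker, hz, Complex.zero_re]
      exact ⟨by rw [hz, hck, Complex.ofReal_zero], le_of_eq hck.symm⟩
  | succ m ih =>
    intro n
    obtain ⟨e1, p1⟩ := ih (n + (1, 0))
    obtain ⟨e2, p2⟩ := ih (n - (1, 0))
    obtain ⟨e3, p3⟩ := ih (n + (0, 1))
    obtain ⟨e4, p4⟩ := ih (n - (0, 1))
    have hc := cker_succ ha m n
    constructor
    · rw [Fker_succ, e1, e2, e3, e4, hc]
      push_cast
      ring
    · rw [hc]; positivity

lemma Fker_support (ha : 0 < a) (m : ℕ) :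
    ∀ n : ℤ × ℤ, m < n.1.natAbs + n.2.natAbs → Fker a m n = 0 := by
  induction m with
  | zero =>
    intro n h
    have hn : n ≠ 0 := by
      intro h0
      subst h0
      simp at h
    rw [Fker_zero ha, if_neg hn]
  | succ m ih =>
    intro n h
    rw [Fker_succ, ih _ ?h1, ih _ ?h2, ih _ ?h3, ih _ ?h4]
    · simp
    case h1 => simp only [Prod.fst_add, Prod.snd_add]; omega
    case h2 => simp only [Prod.fst_sub, Prod.snd_sub]; omega
    case h3 => simp only [Prod.fst_add, Prod.snd_add]; omega
    case h4 => simp only [Prod.fst_sub, Prod.snd_sub]; omega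

lemma cker_support (ha : 0 < a) (m : ℕ) (n : ℤ × ℤ)
    (h : m < n.1.natAbs + n.2.natAbs) : cker a m n = 0 := by
  rw [cker, Fker_support ha m n h, Complex.zero_re]

lemma summable_cker (ha : 0 < a) (m : ℕ) : Summable (fun n => cker a m n) := by
  apply summable_of_finite_support
  have hsub : Function.support (fun n => cker a m n) ⊆
      Set.Icc ((-(m : ℤ), -(m : ℤ)) : ℤ × ℤ) ((m : ℤ), (m : ℤ)) := by
    intro n hn
    simp only [Function.mem_support] at hn
    have hb : ¬ (m < n.1.natAbs + n.2.natAbs) := fun hlt => hn (cker_support ha m n hlt)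
    simp only [Set.mem_Icc, Prod.le_def]
    constructor <;> constructor <;> omega
  exact (Set.finite_Icc _ _).subset hsub

lemma shift_summable {f : ℤ × ℤ → ℝ} (hf : Summable f) (v : ℤ × ℤ) :
    Summable fun n : ℤ × ℤ => f (n + v) :=
  ((Equiv.addRight v).summable_iff).2 hf

lemma shift_tsum (f : ℤ × ℤ → ℝ) (v : ℤ × ℤ) :
    ∑' n : ℤ × ℤ, f (n + v) = ∑' n, f n :=
  (Equiv.addRight v).tsum_eq f

lemma sub_summable {f : ℤ × ℤ → ℝ} (hf : Summable f) (v : ℤ × ℤ) :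
    Summable fun n : ℤ × ℤ => f (n - v) :=
  ((Equiv.subRight v).summable_iff).2 hf

lemma sub_tsum (f : ℤ × ℤ → ℝ) (v : ℤ × ℤ) :
    ∑' n : ℤ × ℤ, f (n - v) = ∑' n, f n :=
  (Equiv.subRight v).tsum_eq f

lemma tsum_cker (ha : 0 < a) (m : ℕ) :
    ∑' n : ℤ × ℤ, cker a m n = (2 * π / a) ^ 2 * 4 ^ m := by
  induction m with
  | zero =>
    have hfun : (fun n : ℤ × ℤ => cker a 0 n) =
        fun n => if n = 0 then (2 * π / a) ^ 2 else 0 := by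
      funext n
      rw [cker, Fker_zero ha]
      split_ifs
      · exact Complex.ofReal_re _
      · exact Complex.zero_re
    rw [hfun, tsum_ite_eq]
    ring
  | succ m ih =>
    have hA := shift_summable (summable_cker ha m) (1, 0)
    have hB := sub_summable (summable_cker ha m) (1, 0)
    have hC := shift_summable (summable_cker ha m) (0, 1)
    have hD := sub_summable (summable_cker ha m) (0, 1)
    have hAB : Summable fun n : ℤ × ℤ => cker a m (n + (1, 0)) + cker a m (n - (1, 0)) :=
      hA.add hB
    have hABC : Summable fun n : ℤ × ℤ =>
        cker a m (n + (1, 0)) + cker a m (n - (1, 0)) + cker a m (n + (0, 1)) := hAB.add hC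
    calc ∑' n : ℤ × ℤ, cker a (m + 1) n
        = ∑' n : ℤ × ℤ, (cker a m (n + (1, 0)) + cker a m (n - (1, 0)) +
            cker a m (n + (0, 1)) + cker a m (n - (0, 1))) := by
          simp_rw [cker_succ ha]
      _ = (∑' n : ℤ × ℤ, cker a m (n + (1, 0))) + (∑' n : ℤ × ℤ, cker a m (n - (1, 0))) +
            (∑' n : ℤ × ℤ, cker a m (n + (0, 1))) + (∑' n : ℤ × ℤ, cker a m (n - (0, 1))) := by
          rw [Summable.tsum_add hABC hD, Summable.tsum_add hAB hC, Summable.tsum_add hA hB]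
      _ = 4 * ∑' n : ℤ × ℤ, cker a m n := by
          rw [shift_tsum (fun n => cker a m n) (1, 0),
            sub_tsum (fun n => cker a m n) (1, 0),
            shift_tsum (fun n => cker a m n) (0, 1),
            sub_tsum (fun n => cker a m n) (0, 1)]
          ring
      _ = (2 * π / a) ^ 2 * 4 ^ (m + 1) := by rw [ih]; ring

def Dc (a M : ℝ) : ℝ := 4 + a ^ 2 * M ^ 2

lemma four_lt_Dc {a M : ℝ} (ha : 0 < a) (hM : 0 < M) : 4 < Dc a M := by
  have h : 0 < a ^ 2 * M ^ 2 := by positivity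
  unfold Dc; linarith

lemma fker_abs_le (a : ℝ) (k : ℝ × ℝ) : |fker a k| ≤ 4 := by
  unfold fker
  rw [abs_le]
  constructor <;>
    nlinarith [Real.neg_one_le_cos (a * k.1), Real.cos_le_one (a * k.1),
      Real.neg_one_le_cos (a * k.2), Real.cos_le_one (a * k.2)]

lemma inv_expand {a M : ℝ} (ha : 0 < a) (hM : 0 < M) (k : ℝ × ℝ) :
    (1 : ℝ) / (sigmaSq a k + M ^ 2) =
      ∑' m : ℕ, a ^ 2 * fker a k ^ m / Dc a M ^ (m + 1) := by
  have hD := four_lt_Dc ha hM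
  have hD0 : (0 : ℝ) < Dc a M := by linarith
  have hfk := fker_abs_le a k
  have habs : |fker a k| ≤ 4 := hfk
  have hfle : fker a k ≤ 4 := (abs_le.1 habs).2
  have hfge : -4 ≤ fker a k := (abs_le.1 habs).1
  have hx : |fker a k / Dc a M| < 1 := by
    rw [abs_div, abs_of_pos hD0, div_lt_one hD0]
    linarith
  have hgeo : ∑' m : ℕ, (fker a k / Dc a M) ^ m = (1 - fker a k / Dc a M)⁻¹ :=
    tsum_geometric_of_norm_lt_one (by rwa [Real.norm_eq_abs])
  have hterm : ∀ m : ℕ, a ^ 2 * fker a k ^ m / Dc a M ^ (m + 1)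
      = (a ^ 2 / Dc a M) * (fker a k / Dc a M) ^ m := by
    intro m
    rw [pow_succ, div_pow]
    ring
  have hs : sigmaSq a k + M ^ 2 = (Dc a M - fker a k) / a ^ 2 := by
    unfold sigmaSq fker Dc
    field_simp
    ring
  have hDf : 0 < Dc a M - fker a k := by linarith
  calc (1 : ℝ) / (sigmaSq a k + M ^ 2) = a ^ 2 / (Dc a M - fker a k) := by
        rw [hs, one_div_div]
    _ = (a ^ 2 / Dc a M) * (1 - fker a k / Dc a M)⁻¹ := by
        field_simp
    _ = (a ^ 2 / Dc a M) * ∑' m : ℕ, (fker a k / Dc a M) ^ m := by rw [hgeo]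
    _ = ∑' m : ℕ, a ^ 2 * fker a k ^ m / Dc a M ^ (m + 1) := by
        rw [← tsum_mul_left]
        exact tsum_congr fun m => (hterm m).symm

lemma integrand_expand {a M : ℝ} (ha : 0 < a) (hM : 0 < M) (n : ℤ × ℤ) (k : ℝ × ℝ) :
    Complex.exp (Complex.I * (k.1 * (a * (n.1 : ℝ)) + k.2 * (a * (n.2 : ℝ)))) /
        ((sigmaSq a k + M ^ 2 : ℝ) : ℂ) =
      ∑' m : ℕ, eker a n k * ((a ^ 2 * fker a k ^ m / Dc a M ^ (m + 1) : ℝ) : ℂ) := by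
  have h1 : Complex.exp (Complex.I * (k.1 * (a * (n.1 : ℝ)) + k.2 * (a * (n.2 : ℝ)))) /
      ((sigmaSq a k + M ^ 2 : ℝ) : ℂ) =
      eker a n k * (((1 : ℝ) / (sigmaSq a k + M ^ 2) : ℝ) : ℂ) := by
    unfold eker
    rw [div_eq_mul_inv, one_div, Complex.ofReal_inv]
  rw [h1, inv_expand ha hM, Complex.ofReal_tsum, ← tsum_mul_left]

lemma g_eq {a M : ℝ} (ha : 0 < a) (hM : 0 < M) (n : ℤ × ℤ) :
    g a M n = (((a ^ 2 / (2 * π) ^ 2) * ∑' m : ℕ, cker a m n / Dc a M ^ (m + 1) : ℝ) : ℂ) := by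
  have hD := four_lt_Dc ha hM
  have hD0 : (0 : ℝ) < Dc a M := by linarith
  have hint : ∀ m : ℕ, IntegrableOn
      (fun k => eker a n k * ((a ^ 2 * fker a k ^ m / Dc a M ^ (m + 1) : ℝ) : ℂ)) (BZ a) := by
    intro m
    have hc : Continuous fun k : ℝ × ℝ =>
        eker a n k * ((a ^ 2 * fker a k ^ m / Dc a M ^ (m + 1) : ℝ) : ℂ) := by
      unfold eker fker; fun_prop
    exact hc.continuousOn.integrableOn_compact (isCompact_BZ a)
  have hnorm_eker : ∀ k : ℝ × ℝ, ‖eker a n k‖ = 1 := by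
    intro k
    unfold eker
    rw [Complex.norm_exp]
    norm_num
  have hnorm : ∀ (m : ℕ) (k : ℝ × ℝ),
      ‖eker a n k * ((a ^ 2 * fker a k ^ m / Dc a M ^ (m + 1) : ℝ) : ℂ)‖ ≤
        a ^ 2 / Dc a M * (4 / Dc a M) ^ m := by
    intro m k
    rw [norm_mul, hnorm_eker, one_mul, Complex.norm_real, Real.norm_eq_abs]
    have h2 : |a ^ 2 * fker a k ^ m / Dc a M ^ (m + 1)| =
        a ^ 2 * |fker a k| ^ m / Dc a M ^ (m + 1) := by
      rw [abs_div, abs_mul, _root_.abs_pow, _root_.abs_pow, _root_.abs_pow, _root_.sq_abs,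
        _root_.abs_of_pos hD0]
    rw [h2]
    calc a ^ 2 * |fker a k| ^ m / Dc a M ^ (m + 1)
        ≤ a ^ 2 * 4 ^ m / Dc a M ^ (m + 1) := by
          gcongr
          exact fker_abs_le a k
      _ = a ^ 2 / Dc a M * (4 / Dc a M) ^ m := by rw [pow_succ, div_pow]; ring
  have hVlt : volume (BZ a) < ⊤ := (isCompact_BZ a).measure_lt_top
  have hbound : ∀ m : ℕ,
      (∫ k in BZ a, ‖eker a n k * ((a ^ 2 * fker a k ^ m / Dc a M ^ (m + 1) : ℝ) : ℂ)‖) ≤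
        (volume (BZ a)).toReal * (a ^ 2 / Dc a M * (4 / Dc a M) ^ m) := by
    intro m
    have h1 := setIntegral_mono_on ((hint m).norm)
      (integrableOn_const hVlt.ne) (isCompact_BZ a).measurableSet
      (fun k _ => hnorm m k)
    simpa [setIntegral_const, smul_eq_mul, Measure.real] using h1
  have hsum : Summable fun m : ℕ =>
      ∫ k in BZ a, ‖eker a n k * ((a ^ 2 * fker a k ^ m / Dc a M ^ (m + 1) : ℝ) : ℂ)‖ := by
    refine Summable.of_nonneg_of_le (fun m => integral_nonneg fun k => norm_nonneg _) hbound ?_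
    have hr : (0:ℝ) ≤ 4 / Dc a M := by positivity
    have hr1 : 4 / Dc a M < 1 := by rw [div_lt_one hD0]; linarith
    exact ((summable_geometric_of_lt_one hr hr1).mul_left _).mul_left _
  have key : (∫ k in BZ a,
        Complex.exp (Complex.I * (k.1 * (a * (n.1 : ℝ)) + k.2 * (a * (n.2 : ℝ)))) /
          ((sigmaSq a k + M ^ 2 : ℝ) : ℂ)) =
      ∑' m : ℕ, ∫ k in BZ a,
        eker a n k * ((a ^ 2 * fker a k ^ m / Dc a M ^ (m + 1) : ℝ) : ℂ) := by
    rw [setIntegral_congr_fun (isCompact_BZ a).measurableSet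
      (fun k _ => integrand_expand ha hM n k)]
    exact (integral_tsum_of_summable_integral_norm hint hsum).symm
  have hm : ∀ m : ℕ, (∫ k in BZ a,
      eker a n k * ((a ^ 2 * fker a k ^ m / Dc a M ^ (m + 1) : ℝ) : ℂ)) =
      ((a ^ 2 / Dc a M ^ (m + 1) : ℝ) : ℂ) * Fker a m n := by
    intro m
    rw [show (fun k : ℝ × ℝ => eker a n k * ((a ^ 2 * fker a k ^ m / Dc a M ^ (m + 1) : ℝ) : ℂ)) =
        fun k : ℝ × ℝ => ((a ^ 2 / Dc a M ^ (m + 1) : ℝ) : ℂ) *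
          (eker a n k * (fker a k : ℂ) ^ m) from funext fun k => by push_cast; ring]
    rw [MeasureTheory.integral_const_mul]
    rfl
  have hreal : ∀ m : ℕ, ((a ^ 2 / Dc a M ^ (m + 1) : ℝ) : ℂ) * Fker a m n =
      ((a ^ 2 / Dc a M ^ (m + 1) * cker a m n : ℝ) : ℂ) := by
    intro m
    rw [(Fker_real ha m n).1]
    push_cast
    ring
  have hT : (∑' m : ℕ, a ^ 2 / Dc a M ^ (m + 1) * cker a m n) =
      a ^ 2 * ∑' m : ℕ, cker a m n / Dc a M ^ (m + 1) := by
    rw [← tsum_mul_left]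
    exact tsum_congr fun m => by ring
  calc g a M n = ((2 * π : ℝ) ^ 2 : ℂ)⁻¹ *
        ∑' m : ℕ, ((a ^ 2 / Dc a M ^ (m + 1) * cker a m n : ℝ) : ℂ) := by
        rw [g, key]
        congr 1
        exact tsum_congr fun m => by rw [hm m, hreal m]
    _ = ((2 * π : ℝ) ^ 2 : ℂ)⁻¹ *
        ((∑' m : ℕ, a ^ 2 / Dc a M ^ (m + 1) * cker a m n : ℝ) : ℂ) := by
        rw [Complex.ofReal_tsum]
    _ = (((a ^ 2 / (2 * π) ^ 2) * ∑' m : ℕ, cker a m n / Dc a M ^ (m + 1) : ℝ) : ℂ) := by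
        rw [hT]
        push_cast
        ring

lemma swap_summable {f : ℕ × (ℤ × ℤ) → ℝ} (h : Summable f) :
    Summable fun q : (ℤ × ℤ) × ℕ => f (q.2, q.1) :=
  ((Equiv.prodComm (ℤ × ℤ) ℕ).summable_iff).2 h

lemma swap_tsum (f : ℕ × (ℤ × ℤ) → ℝ) :
    ∑' q : (ℤ × ℤ) × ℕ, f (q.2, q.1) = ∑' p : ℕ × (ℤ × ℤ), f p :=
  (Equiv.prodComm (ℤ × ℤ) ℕ).tsum_eq f

theorem boson_propagator_position_space (a M : ℝ) (ha : 0 < a) (hM : 0 < M) :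
    (∀ n : ℤ × ℤ, (g a M n).im = 0 ∧ 0 ≤ (g a M n).re) ∧
    Summable (fun n : ℤ × ℤ => g a M n) ∧
    (a ^ 2 : ℂ) * ∑' n : ℤ × ℤ, g a M n = 1 / (M ^ 2 : ℂ) ∧
    Summable (fun n : ℤ × ℤ => ‖g a M n‖) ∧
    a ^ 2 * ∑' n : ℤ × ℤ, ‖g a M n‖ = 1 / M ^ 2 := by
  have hD := four_lt_Dc ha hM
  have hD0 : (0 : ℝ) < Dc a M := by linarith
  set K : ℝ := a ^ 2 / (2 * π) ^ 2 with hK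
  have hK0 : 0 ≤ K := by positivity
  set S : (ℤ × ℤ) → ℝ := fun n => ∑' m : ℕ, cker a m n / Dc a M ^ (m + 1) with hS
  have hpos : ∀ p : ℕ × (ℤ × ℤ), 0 ≤ cker a p.1 p.2 / Dc a M ^ (p.1 + 1) :=
    fun p => div_nonneg (Fker_real ha p.1 p.2).2 (by positivity)
  have hpos' : ∀ q : (ℤ × ℤ) × ℕ, 0 ≤ cker a q.2 q.1 / Dc a M ^ (q.2 + 1) :=
    fun q => hpos (q.2, q.1)
  have hslice : ∀ m : ℕ, Summable fun n : ℤ × ℤ => cker a m n / Dc a M ^ (m + 1) :=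
    fun m => (summable_cker ha m).div_const _
  have htsum_slice : ∀ m : ℕ, (∑' n : ℤ × ℤ, cker a m n / Dc a M ^ (m + 1))
      = (2 * π / a) ^ 2 / Dc a M * (4 / Dc a M) ^ m := by
    intro m
    rw [tsum_div_const, tsum_cker ha m, pow_succ, div_pow]
    ring
  have hr0 : (0 : ℝ) ≤ 4 / Dc a M := by positivity
  have hr1 : 4 / Dc a M < 1 := by rw [div_lt_one hD0]; linarith
  have hgeo : Summable fun m : ℕ => (2 * π / a) ^ 2 / Dc a M * (4 / Dc a M) ^ m :=
    (summable_geometric_of_lt_one hr0 hr1).mul_left _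
  have hprod : Summable (fun p : ℕ × (ℤ × ℤ) => cker a p.1 p.2 / Dc a M ^ (p.1 + 1)) := by
    refine (summable_prod_of_nonneg hpos).2 ⟨hslice, ?_⟩
    have : (fun m : ℕ => ∑' n : ℤ × ℤ, cker a m n / Dc a M ^ (m + 1)) =
        fun m : ℕ => (2 * π / a) ^ 2 / Dc a M * (4 / Dc a M) ^ m := funext htsum_slice
    rw [this]
    exact hgeo
  have hswap : Summable (fun q : (ℤ × ℤ) × ℕ => cker a q.2 q.1 / Dc a M ^ (q.2 + 1)) :=
    swap_summable hprod
  have hslice_n : ∀ n : ℤ × ℤ, Summable fun m : ℕ => cker a m n / Dc a M ^ (m + 1) :=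
    fun n => ((summable_prod_of_nonneg hpos').1 hswap).1 n
  have hsumS : Summable S := ((summable_prod_of_nonneg hpos').1 hswap).2
  have hS_tsum : (∑' n : ℤ × ℤ, S n) = (2 * π) ^ 2 / (a ^ 4 * M ^ 2) := by
    have h1 : (∑' n : ℤ × ℤ, S n) =
        ∑' m : ℕ, ∑' n : ℤ × ℤ, cker a m n / Dc a M ^ (m + 1) := by
      calc (∑' n : ℤ × ℤ, S n)
          = ∑' q : (ℤ × ℤ) × ℕ, cker a q.2 q.1 / Dc a M ^ (q.2 + 1) :=
            (Summable.tsum_prod' hswap hslice_n).symm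
        _ = ∑' p : ℕ × (ℤ × ℤ), cker a p.1 p.2 / Dc a M ^ (p.1 + 1) :=
            swap_tsum (fun p : ℕ × (ℤ × ℤ) => cker a p.1 p.2 / Dc a M ^ (p.1 + 1))
        _ = _ := Summable.tsum_prod' hprod hslice
    rw [h1, tsum_congr htsum_slice, tsum_mul_left,
      tsum_geometric_of_lt_one hr0 hr1]
    have h3 : (1 : ℝ) - 4 / Dc a M = a ^ 2 * M ^ 2 / Dc a M := by
      rw [eq_div_iff hD0.ne', sub_mul, div_mul_cancel₀ _ hD0.ne']
      unfold Dc; ring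
    rw [h3, inv_div, div_mul_div_comm, mul_comm (Dc a M) (a ^ 2 * M ^ 2),
      mul_div_mul_right _ _ hD0.ne', div_pow, div_div]
    ring_nf
  have hg : ∀ n : ℤ × ℤ, g a M n = ((K * S n : ℝ) : ℂ) := by
    intro n
    rw [g_eq ha hM n]
  have hSn0 : ∀ n : ℤ × ℤ, 0 ≤ S n := fun n => tsum_nonneg fun m => hpos (m, n)
  have hKS : Summable fun n : ℤ × ℤ => K * S n := hsumS.mul_left K
  have hgnorm : ∀ n : ℤ × ℤ, ‖g a M n‖ = K * S n := by
    intro n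
    rw [hg n, Complex.norm_real, Real.norm_of_nonneg (mul_nonneg hK0 (hSn0 n))]
  have htotal : a ^ 2 * (K * ∑' n : ℤ × ℤ, S n) = 1 / M ^ 2 := by
    rw [hS_tsum, hK]
    field_simp
  refine ⟨?_, ?_, ?_, ?_, ?_⟩
  · intro n
    rw [hg n]
    exact ⟨Complex.ofReal_im _, by rw [Complex.ofReal_re]; exact mul_nonneg hK0 (hSn0 n)⟩
  · have : (fun n : ℤ × ℤ => g a M n) = fun n => ((K * S n : ℝ) : ℂ) := funext hg
    rw [this]
    exact hKS.map Complex.ofRealHom.toAddMonoidHom Complex.continuous_ofReal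
  · have h2 : (∑' n : ℤ × ℤ, g a M n) = ((K * ∑' n : ℤ × ℤ, S n : ℝ) : ℂ) := by
      rw [tsum_congr hg, ← Complex.ofReal_tsum, tsum_mul_left]
    rw [h2, show ((a : ℝ) ^ 2 : ℂ) = ((a ^ 2 : ℝ) : ℂ) by push_cast; ring,
      ← Complex.ofReal_mul]
    rw [show (1 / ((M : ℝ) ^ 2 : ℂ)) = ((1 / M ^ 2 : ℝ) : ℂ) by push_cast; ring]
    exact_mod_cast congrArg Complex.ofReal htotal
  · have : (fun n : ℤ × ℤ => ‖g a M n‖) = fun n => K * S n := funext hgnorm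
    rw [this]
    exact hKS
  · rw [tsum_congr hgnorm, tsum_mul_left]
    exact htotal


end SommerfieldStmt3
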